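/- Any least squares rating vector q (a vector with Σ_i q_i = 0 and L·q = s) is a global minimizer over ℝⁿ of the quadratic objective F(x) = xᵀ L x − 2 sᵀ x; i.e., F(q) ≤ F(x) for all x ∈ ℝⁿ. (This is the least squared errors characterization of the least squares method.) -/

import Mathlib

open Matrix Finset

/-- The Laplacian matrix of the matches matrix `M`:
`L i j = -M i j` for `i ≠ j` and `L i i = ∑_{j ≠ i} M i j`. -/
def lap {n : ℕ} (M : Matrix (Fin n) (Fin n) ℝ) : Matrix (Fin n) (Fin n) ℝ :=
  Matrix.of fun i j => if i = j then ∑ k ∈ Finset.univ.erase i, M i k else -M i j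

lemma lap_mulVec {n : ℕ} (M : Matrix (Fin n) (Fin n) ℝ) (v : Fin n → ℝ) (i : Fin n) :
    (lap M *ᵥ v) i = ∑ k, M i k * (v i - v k) := by
  rw [mulVec, dotProduct,
      ← Finset.add_sum_erase _ _ (Finset.mem_univ i),
      ← Finset.add_sum_erase _ (fun k => M i k * (v i - v k)) (Finset.mem_univ i)]
  simp only [lap, of_apply, if_true, sub_self, mul_zero, zero_add]
  rw [Finset.sum_mul]
  have : ∀ j ∈ Finset.univ.erase i,
      (if i = j then ∑ k ∈ Finset.univ.erase i, M i k else -M i j) * v j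
        = M i j * (v i - v j) - M i j * v i := by
    intro j hj
    have hij : i ≠ j := (Finset.ne_of_mem_erase hj).symm
    rw [if_neg hij]
    ring
  rw [Finset.sum_congr rfl this, Finset.sum_sub_distrib]
  ring

lemma lap_symm {n : ℕ} (M : Matrix (Fin n) (Fin n) ℝ) (hsymm : M.IsSymm) :
    (lap M).IsSymm := by
  ext i j
  simp only [transpose_apply, lap, of_apply]
  rcases eq_or_ne i j with h | h
  · subst h; rfl
  · rw [if_neg h.symm, if_neg h, ← hsymm.apply i j]

lemma lap_quad {n : ℕ} (M : Matrix (Fin n) (Fin n) ℝ) (hsymm : M.IsSymm) (v : Fin n → ℝ) :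
    2 * (v ⬝ᵥ (lap M *ᵥ v)) = ∑ i, ∑ k, M i k * (v i - v k) ^ 2 := by
  simp only [dotProduct, lap_mulVec]
  have h1 : ∑ i, v i * ∑ k, M i k * (v i - v k)
      = ∑ i, ∑ k, M i k * (v i - v k) * v i := by
    simp_rw [Finset.mul_sum]; congr 1; ext i; congr 1; ext k; ring
  have h2 : ∑ i, ∑ k, M i k * (v i - v k) * v k
      = - ∑ i, ∑ k, M i k * (v i - v k) * v i := by
    rw [Finset.sum_comm, ← Finset.sum_neg_distrib]
    congr 1; ext k
    rw [← Finset.sum_neg_distrib]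
    congr 1; ext i
    rw [← hsymm.apply k i]
    ring
  calc 2 * ∑ i, v i * ∑ k, M i k * (v i - v k)
      = ∑ i, ∑ k, M i k * (v i - v k) * v i
        - ∑ i, ∑ k, M i k * (v i - v k) * v k := by rw [h1, h2]; ring
    _ = ∑ i, ∑ k, M i k * (v i - v k) ^ 2 := by
        rw [← Finset.sum_sub_distrib]
        congr 1; ext i
        rw [← Finset.sum_sub_distrib]
        congr 1; ext k; ring

lemma lap_psd {n : ℕ} (M : Matrix (Fin n) (Fin n) ℝ) (hsymm : M.IsSymm)
    (hnonneg : ∀ i j, 0 ≤ M i j) (v : Fin n → ℝ) :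
    0 ≤ v ⬝ᵥ (lap M *ᵥ v) := by
  have h := lap_quad M hsymm v
  nlinarith [Finset.sum_nonneg (fun i (_ : i ∈ Finset.univ) =>
    Finset.sum_nonneg (fun k (_ : k ∈ Finset.univ) =>
      mul_nonneg (hnonneg i k) (sq_nonneg (v i - v k))))]

/-- Any least squares rating vector `q` (with `∑ q = 0` and `L q = s`) is a global
minimizer of `F(x) = xᵀ L x - 2 sᵀ x`. -/
theorem least_squares_minimizes
    (n : ℕ) (hn : 1 ≤ n) (M : Matrix (Fin n) (Fin n) ℝ)
    (hsymm : M.IsSymm) (hnonneg : ∀ i j, 0 ≤ M i j) (hdiag : ∀ i, M i i = 0)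
    (s : Fin n → ℝ) (hs : ∑ i, s i = 0)
    (q : Fin n → ℝ) (hq0 : ∑ i, q i = 0) (hq : lap M *ᵥ q = s) :
    ∀ x : Fin n → ℝ,
      q ⬝ᵥ (lap M *ᵥ q) - 2 * (s ⬝ᵥ q) ≤ x ⬝ᵥ (lap M *ᵥ x) - 2 * (s ⬝ᵥ x) := by
  intro x
  set y : Fin n → ℝ := x - q with hy
  have hx : x = q + y := by simp [hy]
  have hcross : q ⬝ᵥ (lap M *ᵥ y) = y ⬝ᵥ (lap M *ᵥ q) := by
    rw [dotProduct_mulVec, dotProduct_comm, ← mulVec_transpose, (lap_symm M hsymm).eq]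
  have hpsd := lap_psd M hsymm hnonneg y
  have h1 : (q + y) ⬝ᵥ (lap M *ᵥ (q + y))
      = q ⬝ᵥ (lap M *ᵥ q) + 2 * (y ⬝ᵥ s) + y ⬝ᵥ (lap M *ᵥ y) := by
    rw [mulVec_add, dotProduct_add, add_dotProduct, add_dotProduct, hcross, hq]; ring
  have h2 : s ⬝ᵥ (q + y) = s ⬝ᵥ q + s ⬝ᵥ y := dotProduct_add s q y
  have h3 : s ⬝ᵥ y = y ⬝ᵥ s := dotProduct_comm s y
  rw [hx, h1, h2]
  linarith
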